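/- Let K ≥ 1 and N, η > 0. Suppose B : ℝ → ℝ is three times continuously differentiable on [0, 1/4] with B(0) = 0, B''(0) = 0, and |B'(y)| ≤ Kη/N and |B'''(y)| ≤ Kη/N for all y ∈ [0, 1/4]. Suppose a ∈ ℝ and y₀ ∈ (0, 1/10] satisfy a·sin(2πy₀) + B(y₀) = 0. Then there is an absolute constant C such that |2πa·cos(2πy₀) + B'(y₀)| ≤ C·K·η·y₀²/N. -/

import Mathlib

open Real

/-- A fencing lemma on `[0, b]`: if `|f 0| ≤ g 0`, `|f'| ≤ g'`, then `|f| ≤ g`. -/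
lemma fence_abs {f f' g g' : ℝ → ℝ} {b : ℝ}
    (hf : ∀ y ∈ Set.Icc (0:ℝ) b, HasDerivAt f (f' y) y)
    (hg : ∀ x, HasDerivAt g (g' x) x)
    (h0 : |f 0| ≤ g 0)
    (hb : ∀ y ∈ Set.Icc (0:ℝ) b, |f' y| ≤ g' y) :
    ∀ y ∈ Set.Icc (0:ℝ) b, |f y| ≤ g y := by
  intro y hy
  have hcont : ContinuousOn f (Set.Icc 0 b) := fun z hz =>
    (hf z hz).continuousAt.continuousWithinAt
  have hf' : ∀ z ∈ Set.Ico (0:ℝ) b, HasDerivWithinAt f (f' z) (Set.Ici z) z := fun z hz =>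
    (hf z (Set.Ico_subset_Icc_self hz)).hasDerivWithinAt
  have := image_norm_le_of_norm_deriv_right_le_deriv_boundary hcont hf'
    (by simpa [Real.norm_eq_abs] using h0) hg
    (fun z hz => by simpa [Real.norm_eq_abs] using hb z (Set.Ico_subset_Icc_self hz)) hy
  simpa [Real.norm_eq_abs] using this

set_option maxHeartbeats 1000000 in
/-- Key estimate in the proof of Proposition 4.4: if `B` is `C³` on `[0,1/4]`
with `B(0) = 0`, `B''(0) = 0`, `|B'| ≤ Kη/N`, `|B'''| ≤ Kη/N`, and
`a sin(2πy₀) + B(y₀) = 0` with `y₀ ∈ (0, 1/10]`, then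
`|2πa cos(2πy₀) + B'(y₀)| ≤ CKηy₀²/N`. -/
theorem stmt19 : ∃ C : ℝ, 0 < C ∧
    ∀ (K N η a y₀ : ℝ) (B B' B'' B''' : ℝ → ℝ),
      1 ≤ K → 0 < N → 0 < η →
      (∀ y ∈ Set.Icc (0:ℝ) (1/4), HasDerivAt B (B' y) y) →
      (∀ y ∈ Set.Icc (0:ℝ) (1/4), HasDerivAt B' (B'' y) y) →
      (∀ y ∈ Set.Icc (0:ℝ) (1/4), HasDerivAt B'' (B''' y) y) →
      ContinuousOn B''' (Set.Icc (0:ℝ) (1/4)) →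
      B 0 = 0 → B'' 0 = 0 →
      (∀ y ∈ Set.Icc (0:ℝ) (1/4), |B' y| ≤ K * η / N) →
      (∀ y ∈ Set.Icc (0:ℝ) (1/4), |B''' y| ≤ K * η / N) →
      0 < y₀ → y₀ ≤ 1 / 10 →
      a * Real.sin (2 * π * y₀) + B y₀ = 0 →
      |2 * π * a * Real.cos (2 * π * y₀) + B' y₀| ≤ C * K * η * y₀ ^ 2 / N := by
  refine ⟨100, by norm_num, ?_⟩
  intro K N η a y₀ B B' B'' B''' hK hN hη hB hB' hB'' _hB''' hB0 hB''0 hB'bd hB'''bd hy0 hy1 hnode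
  set M : ℝ := K * η / N with hMdef
  have hM : 0 < M := by positivity
  have hy04 : y₀ ∈ Set.Icc (0:ℝ) (1/4) := ⟨hy0.le, by linarith⟩
  have h04 : ∀ y ∈ Set.Icc (0:ℝ) y₀, y ∈ Set.Icc (0:ℝ) (1/4) := fun y hy =>
    ⟨hy.1, by linarith [hy.2]⟩
  -- Step 1: |B'' y| ≤ M y on [0, y₀]
  have step1 : ∀ y ∈ Set.Icc (0:ℝ) y₀, |B'' y| ≤ M * y := by
    refine fence_abs (f' := B''') (g := fun y => M * y) (g' := fun _ => M)
      (fun y hy => hB'' y (h04 y hy))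
      (fun x => by simpa using (hasDerivAt_id x).const_mul M) ?_ ?_
    · simp [hB''0]
    · exact fun y hy => hB'''bd y (h04 y hy)
  -- Step 2: |B' y - B' 0| ≤ M y² / 2
  have step2 : ∀ y ∈ Set.Icc (0:ℝ) y₀, |B' y - B' 0| ≤ M * y ^ 2 / 2 := by
    refine fence_abs (f' := B'') (g := fun y => M * y ^ 2 / 2) (g' := fun y => M * y)
      (fun y hy => (hB' y (h04 y hy)).sub_const (B' 0)) ?_ (by simp) step1
    · intro x
      have h : HasDerivAt (fun y : ℝ => M * y ^ 2 / 2) (M * (↑2 * x ^ 1) / 2) x :=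
        ((hasDerivAt_pow 2 x).const_mul M).div_const 2
      exact h.congr_deriv (by push_cast; ring)
  -- Step 3: |B y - B' 0 * y| ≤ M y³ / 6
  have step3 : ∀ y ∈ Set.Icc (0:ℝ) y₀, |B y - B' 0 * y| ≤ M * y ^ 3 / 6 := by
    refine fence_abs (f' := fun y => B' y - B' 0) (g := fun y => M * y ^ 3 / 6)
      (g' := fun y => M * y ^ 2 / 2) ?_ ?_ (by simp [hB0]) step2
    · intro y hy
      have hid : HasDerivAt (fun y : ℝ => B' 0 * y) (B' 0 * 1) y :=
        (hasDerivAt_id y).const_mul (B' 0)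
      exact ((hB y (h04 y hy)).sub hid).congr_deriv (by ring)
    · intro x
      have h : HasDerivAt (fun y : ℝ => M * y ^ 3 / 6) (M * (↑3 * x ^ 2) / 6) x :=
        ((hasDerivAt_pow 3 x).const_mul M).div_const 6
      exact h.congr_deriv (by push_cast; ring)
  -- Trig bound: |sin t - t cos t| ≤ t³/3 on [0, x], x = 2πy₀
  set x : ℝ := 2 * π * y₀ with hxdef
  have hpi3 : (3:ℝ) ≤ π := by linarith [Real.pi_gt_three]
  have hpi4 : π ≤ 4 := by linarith [Real.pi_lt_d2]
  have hxpos : 0 < x := by positivity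
  have hx1 : x ≤ 1 := by rw [hxdef]; nlinarith
  have trig : ∀ t ∈ Set.Icc (0:ℝ) x, |Real.sin t - t * Real.cos t| ≤ t ^ 3 / 3 := by
    refine fence_abs (f' := fun t => t * Real.sin t) (g' := fun t => t ^ 2) ?_ ?_ (by simp) ?_
    · intro t _
      have h1 : HasDerivAt (fun t : ℝ => Real.sin t - t * Real.cos t)
          (Real.cos t - (1 * Real.cos t + t * (-Real.sin t))) t :=
        (Real.hasDerivAt_sin t).sub ((hasDerivAt_id t).mul (Real.hasDerivAt_cos t))
      exact h1.congr_deriv (by ring)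
    · intro t
      exact ((hasDerivAt_pow 3 t).div_const 3).congr_deriv (by push_cast; ring)
    · intro t ht
      have ht0 : 0 ≤ t := ht.1
      have htx : t ≤ x := ht.2
      have hsnn : 0 ≤ Real.sin t := Real.sin_nonneg_of_nonneg_of_le_pi ht0 (by linarith)
      have hsle : Real.sin t ≤ t := by
        rcases eq_or_lt_of_le ht0 with h | h
        · simp [← h]
        · exact (Real.sin_lt h).le
      have : |t * Real.sin t| = t * Real.sin t := abs_of_nonneg (by positivity)
      rw [this]
      nlinarith [mul_le_mul_of_nonneg_left hsle ht0]
  -- Assemble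
  have htrig := trig x ⟨hxpos.le, le_refl x⟩
  have hR1 := step3 y₀ ⟨hy0.le, le_refl y₀⟩
  have hR2 := step2 y₀ ⟨hy0.le, le_refl y₀⟩
  have hb0 : |B' 0| ≤ M := hB'bd 0 (by norm_num)
  -- sin x bounds
  have hsin_lb : 4.5 * y₀ ≤ Real.sin x := by
    have h1 := Real.sin_gt_sub_cube hxpos
    have hx3 : x ^ 3 ≤ x := by
      nlinarith [mul_nonneg (mul_nonneg hxpos.le (sub_nonneg.2 hx1))
        (by linarith : (0:ℝ) ≤ 1 + x)]
    have h2 : (3/4 : ℝ) * x ≤ Real.sin x := by linarith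
    have h3 : 4.5 * y₀ ≤ (3/4 : ℝ) * x := by rw [hxdef]; nlinarith
    linarith
  have hsin_pos : 0 < Real.sin x := by linarith [hy0]
  have hsin_ub : Real.sin x ≤ x := (Real.sin_lt hxpos).le
  have hcos : |Real.cos x| ≤ 1 := Real.abs_cos_le_one x
  -- T * sin x identity
  set T : ℝ := 2 * π * a * Real.cos x + B' y₀ with hTdef
  have hkey : T * Real.sin x =
      B' 0 * (Real.sin x - x * Real.cos x) - 2 * π * Real.cos x * (B y₀ - B' 0 * y₀)
        + (B' y₀ - B' 0) * Real.sin x := by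
    rw [hTdef]
    linear_combination (2 * π * Real.cos x) * hnode - B' 0 * Real.cos x * hxdef
  -- bound |T| * sin x
  have habsT : |T| * Real.sin x ≤ M * x ^ 3 / 3 + 2 * π * (M * y₀ ^ 3 / 6)
      + M * y₀ ^ 2 / 2 * x := by
    have h1 : |T * Real.sin x| ≤ M * x ^ 3 / 3 + 2 * π * (M * y₀ ^ 3 / 6)
        + M * y₀ ^ 2 / 2 * x := by
      rw [hkey]
      have e1 : |B' 0 * (Real.sin x - x * Real.cos x)| ≤ M * (x ^ 3 / 3) := by
        rw [abs_mul]
        exact mul_le_mul hb0 htrig (abs_nonneg _) hM.le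
      have e2 : |2 * π * Real.cos x * (B y₀ - B' 0 * y₀)| ≤ 2 * π * (M * y₀ ^ 3 / 6) := by
        have h := mul_le_mul hcos hR1 (abs_nonneg _) zero_le_one
        calc |2 * π * Real.cos x * (B y₀ - B' 0 * y₀)|
            = 2 * π * (|Real.cos x| * |B y₀ - B' 0 * y₀|) := by
              rw [abs_mul, abs_mul, abs_of_pos (show (0:ℝ) < 2 * π by positivity)]
              ring
          _ ≤ 2 * π * (1 * (M * y₀ ^ 3 / 6)) :=
              mul_le_mul_of_nonneg_left h (by positivity)
          _ = 2 * π * (M * y₀ ^ 3 / 6) := by ring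
      have e3 : |(B' y₀ - B' 0) * Real.sin x| ≤ M * y₀ ^ 2 / 2 * x := by
        rw [abs_mul, abs_of_pos hsin_pos]
        exact mul_le_mul hR2 hsin_ub hsin_pos.le (by positivity)
      calc |B' 0 * (Real.sin x - x * Real.cos x) - 2 * π * Real.cos x * (B y₀ - B' 0 * y₀)
            + (B' y₀ - B' 0) * Real.sin x|
          ≤ |B' 0 * (Real.sin x - x * Real.cos x)|
            + |2 * π * Real.cos x * (B y₀ - B' 0 * y₀)|
            + |(B' y₀ - B' 0) * Real.sin x| := by
            exact (abs_add_le _ _).trans (by gcongr; exact abs_sub _ _)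
        _ ≤ M * x ^ 3 / 3 + 2 * π * (M * y₀ ^ 3 / 6) + M * y₀ ^ 2 / 2 * x := by
            linarith [e1, e2, e3]
    calc |T| * Real.sin x = |T * Real.sin x| := by
          rw [abs_mul, abs_of_pos hsin_pos]
      _ ≤ _ := h1
  -- numeric finish
  have hrhs : M * x ^ 3 / 3 + 2 * π * (M * y₀ ^ 3 / 6) + M * y₀ ^ 2 / 2 * x
      ≤ 92 * M * y₀ ^ 3 := by
    rw [hxdef]
    have hpi315 : π ≤ 3.15 := by linarith [Real.pi_lt_d2]
    have hpi3' : π ^ 3 ≤ 32 := by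
      calc π ^ 3 ≤ 3.15 ^ 3 := pow_le_pow_left₀ Real.pi_pos.le hpi315 3
        _ ≤ 32 := by norm_num
    have hcoef : 8 * π ^ 3 / 3 + π / 3 + π ≤ 92 := by linarith
    calc M * (2 * π * y₀) ^ 3 / 3 + 2 * π * (M * y₀ ^ 3 / 6) + M * y₀ ^ 2 / 2 * (2 * π * y₀)
        = M * y₀ ^ 3 * (8 * π ^ 3 / 3 + π / 3 + π) := by ring
      _ ≤ M * y₀ ^ 3 * 92 := mul_le_mul_of_nonneg_left hcoef (by positivity)
      _ = 92 * M * y₀ ^ 3 := by ring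
  have hTnn : 0 ≤ |T| := abs_nonneg T
  have final : |T| ≤ 100 * M * y₀ ^ 2 := by
    have h1 : |T| * (4.5 * y₀) ≤ 92 * M * y₀ ^ 3 := by
      calc |T| * (4.5 * y₀) ≤ |T| * Real.sin x := by gcongr
        _ ≤ _ := habsT.trans hrhs
    have hpos : (0:ℝ) < 4.5 * y₀ := by linarith
    rw [← mul_le_mul_iff_of_pos_right hpos]
    have hc : 0 ≤ M * y₀ ^ 3 := mul_nonneg hM.le (pow_pos hy0 3).le
    have h2 : 92 * M * y₀ ^ 3 ≤ 100 * M * y₀ ^ 2 * (4.5 * y₀) := by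
      calc 92 * M * y₀ ^ 3 ≤ 450 * (M * y₀ ^ 3) := by linarith
        _ = 100 * M * y₀ ^ 2 * (4.5 * y₀) := by ring
    linarith
  calc |2 * π * a * Real.cos (2 * π * y₀) + B' y₀| = |T| := by rw [hTdef, hxdef]
    _ ≤ 100 * M * y₀ ^ 2 := final
    _ = 100 * K * η * y₀ ^ 2 / N := by rw [hMdef]; ring
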